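/- arXiv:1901.10911 — 2 statements merged into one kernel-verified Lean document; each statement's English description precedes it below -/
import Mathlib

section
/- Let P be the Petersen graph and let u–v–w be a path of length 2 in P (so u and w are distinct neighbours of v). Let a1, a2 be the neighbours of u other than v, let b1, b2 be the neighbours of w other than v, and let t be the third neighbour of v. Let N be the graph obtained from P − {u,v,w} by adding five new pendant vertices a1*, a2*, b1*, b2*, t* together with the edges a1a1*, a2a2*, b1b1*, b2b2*, tt*. Then N admits a proper 3-edge-colouring, and every proper 3-edge-colouring c of N with colours the three nonzero elements of Z2×Z2 satisfies exactly one of: (i) c(a1a1*) = c(a2a2*), c(b1b1*) ≠ c(b2b2*), and c(tt*) = c(b1b1*)+c(b2b2*); or (ii) c(b1b1*) = c(b2b2*), c(a1a1*) ≠ c(a2a2*), and c(tt*) = c(a1a1*)+c(a2a2*). -/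
/-- A proper 3-edge-colouring of a simple graph: a colour for every unordered pair,
such that distinct edges of the graph sharing a vertex receive distinct colours. -/
def IsProper3EdgeColoring {V : Type*} (G : SimpleGraph V) (c : Sym2 V → Fin 3) : Prop :=
  ∀ e₁ e₂ : Sym2 V, e₁ ∈ G.edgeSet → e₂ ∈ G.edgeSet → e₁ ≠ e₂ →
    (∃ v, v ∈ e₁ ∧ v ∈ e₂) → c e₁ ≠ c e₂

/-- A graph admits a proper 3-edge-colouring. -/
def ThreeEdgeColorable {V : Type*} (G : SimpleGraph V) : Prop :=
  ∃ c : Sym2 V → Fin 3, IsProper3EdgeColoring G c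

/-- The vertices of the Petersen graph: the 2-element subsets of a 5-element set. -/
abbrev PetersenVert : Type := {s : Finset (Fin 5) // s.card = 2}

/-- The Petersen graph, as the Kneser graph of 2-element subsets of a 5-element set:
two subsets are adjacent when they are disjoint. -/
def petersen : SimpleGraph PetersenVert where
  Adj a b := Disjoint (a : Finset (Fin 5)) (b : Finset (Fin 5))
  symm := ⟨fun _ _ h => h.symm⟩
  loopless := by
    constructor
    intro a h
    have := disjoint_self.mp h
    have h2 := a.2
    rw [this] at h2
    simp at h2

/-- A proper 3-edge-colouring with colours the three nonzero elements of `Z2 × Z2`: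
every edge gets a nonzero colour and distinct edges sharing a vertex get distinct
colours. -/
def IsProperK4EdgeColoring {V : Type*} (G : SimpleGraph V)
    (c : Sym2 V → ZMod 2 × ZMod 2) : Prop :=
  (∀ e ∈ G.edgeSet, c e ≠ 0) ∧
  ∀ e₁ e₂ : Sym2 V, e₁ ∈ G.edgeSet → e₂ ∈ G.edgeSet → e₁ ≠ e₂ →
    (∃ v, v ∈ e₁ ∧ v ∈ e₂) → c e₁ ≠ c e₂

/-- The (2,2,1)-pole `N` obtained from the Petersen graph by removing the path
`u–v–w`: five pendant vertices (indexed by `Fin 5`) are attached at the former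
neighbours `a1, a2` of `u`, `b1, b2` of `w`, and the third neighbour `t` of `v`. -/
def poleN (u v w a1 a2 b1 b2 t : PetersenVert) :
    SimpleGraph ({z : PetersenVert // z ≠ u ∧ z ≠ v ∧ z ≠ w} ⊕ Fin 5) :=
  SimpleGraph.fromRel (fun p q =>
    match p, q with
    | Sum.inl x, Sum.inl y => petersen.Adj x.1 y.1
    | Sum.inl x, Sum.inr k =>
        (k = 0 ∧ x.1 = a1) ∨ (k = 1 ∧ x.1 = a2) ∨ (k = 2 ∧ x.1 = b1) ∨
        (k = 3 ∧ x.1 = b2) ∨ (k = 4 ∧ x.1 = t)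
    | _, _ => False)

/-! ### Auxiliary machinery -/

section Transfer
variable {α β : Type*} {G : SimpleGraph α} {H : SimpleGraph β} (e : α ≃ β)

lemma mem_edge_map (hadj : ∀ x y, G.Adj x y ↔ H.Adj (e x) (e y)) (s : Sym2 α) :
    Sym2.map e s ∈ H.edgeSet ↔ s ∈ G.edgeSet := by
  induction s using Sym2.ind with
  | _ x y => simp only [Sym2.map_pair_eq, SimpleGraph.mem_edgeSet]; exact (hadj x y).symm

lemma properK4_pullback (hadj : ∀ x y, G.Adj x y ↔ H.Adj (e x) (e y))
    {c : Sym2 β → ZMod 2 × ZMod 2} (hc : IsProperK4EdgeColoring H c) :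
    IsProperK4EdgeColoring G (fun s => c (Sym2.map e s)) := by
  refine ⟨fun s hs => hc.1 _ ((mem_edge_map e hadj s).mpr hs), ?_⟩
  rintro e₁ e₂ h1 h2 hne ⟨v, hv1, hv2⟩
  refine hc.2 _ _ ((mem_edge_map e hadj e₁).mpr h1) ((mem_edge_map e hadj e₂).mpr h2)
    (fun h => hne (Sym2.map.injective e.injective h)) ⟨e v, ?_, ?_⟩
  · exact Sym2.mem_map.mpr ⟨v, hv1, rfl⟩
  · exact Sym2.mem_map.mpr ⟨v, hv2, rfl⟩

lemma proper3_pullback (hadj : ∀ x y, G.Adj x y ↔ H.Adj (e x) (e y))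
    {c : Sym2 β → Fin 3} (hc : IsProper3EdgeColoring H c) :
    IsProper3EdgeColoring G (fun s => c (Sym2.map e s)) := by
  rintro e₁ e₂ h1 h2 hne ⟨v, hv1, hv2⟩
  refine hc _ _ ((mem_edge_map e hadj e₁).mpr h1) ((mem_edge_map e hadj e₂).mpr h2)
    (fun h => hne (Sym2.map.injective e.injective h)) ⟨e v, ?_, ?_⟩
  · exact Sym2.mem_map.mpr ⟨v, hv1, rfl⟩
  · exact Sym2.mem_map.mpr ⟨v, hv2, rfl⟩

lemma hadj_symm (hadj : ∀ x y, G.Adj x y ↔ H.Adj (e x) (e y)) :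
    ∀ x y, H.Adj x y ↔ G.Adj (e.symm x) (e.symm y) := by
  intro x y
  rw [hadj (e.symm x) (e.symm y), e.apply_symm_apply, e.apply_symm_apply]

lemma threeEdgeColorable_transfer (hadj : ∀ x y, G.Adj x y ↔ H.Adj (e x) (e y)) :
    ThreeEdgeColorable G → ThreeEdgeColorable H := fun ⟨c, hc⟩ =>
  ⟨fun s => c (Sym2.map e.symm s), proper3_pullback e.symm (hadj_symm e hadj) hc⟩

end Transfer

def toF3 : ZMod 2 × ZMod 2 → Fin 3 := fun x => if x = (0,1) then 0 else if x = (1,0) then 1 else 2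

lemma k4_to_three {V : Type*} {G : SimpleGraph V} {c : Sym2 V → ZMod 2 × ZMod 2}
    (hc : IsProperK4EdgeColoring G c) : ThreeEdgeColorable G := by
  refine ⟨fun s => toF3 (c s), ?_⟩
  intro e1 e2 h1 h2 hne hsh
  have h := hc.2 e1 e2 h1 h2 hne hsh
  have n1 := hc.1 e1 h1
  have n2 := hc.1 e2 h2
  show toF3 (c e1) ≠ toF3 (c e2)
  revert h n1 n2
  generalize c e1 = x; generalize c e2 = y
  revert x y; decide

lemma xor_congr {P Q P' Q' : Prop} (h : Xor' P Q) (h1 : P ↔ P') (h2 : Q ↔ Q') : Xor' P' Q' := by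
  unfold Xor' at *; rw [← h1, ← h2]; exact h

/-! ### Decidability -/

instance : DecidableRel petersen.Adj := fun a b =>
  inferInstanceAs (Decidable (Disjoint a.1 b.1))

instance relDec (u v w a1 a2 b1 b2 t : PetersenVert)
    (p q : {z : PetersenVert // z ≠ u ∧ z ≠ v ∧ z ≠ w} ⊕ Fin 5) :
    Decidable (match p, q with
    | Sum.inl x, Sum.inl y => petersen.Adj x.1 y.1
    | Sum.inl x, Sum.inr k =>
        (k = 0 ∧ x.1 = a1) ∨ (k = 1 ∧ x.1 = a2) ∨ (k = 2 ∧ x.1 = b1) ∨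
        (k = 3 ∧ x.1 = b2) ∨ (k = 4 ∧ x.1 = t)
    | _, _ => False) := by
  cases p <;> cases q <;> dsimp only [] <;> infer_instance

instance poleNAdjDec (u v w a1 a2 b1 b2 t : PetersenVert) :
    DecidableRel (poleN u v w a1 a2 b1 b2 t).Adj := fun p q =>
  decidable_of_iff _ (SimpleGraph.fromRel_adj _ p q).symm

/-! ### Canonical configuration -/

def u0 : PetersenVert := ⟨{2,3}, by decide⟩
def v0 : PetersenVert := ⟨{0,1}, by decide⟩
def w0 : PetersenVert := ⟨{2,4}, by decide⟩
def A1 : PetersenVert := ⟨{0,4}, by decide⟩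
def A2 : PetersenVert := ⟨{1,4}, by decide⟩
def B1 : PetersenVert := ⟨{0,3}, by decide⟩
def B2 : PetersenVert := ⟨{1,3}, by decide⟩
def T0 : PetersenVert := ⟨{3,4}, by decide⟩
def X0 : PetersenVert := ⟨{0,2}, by decide⟩
def Y0 : PetersenVert := ⟨{1,2}, by decide⟩

abbrev Vc := {z : PetersenVert // z ≠ u0 ∧ z ≠ v0 ∧ z ≠ w0} ⊕ Fin 5
abbrev Gc : SimpleGraph Vc := poleN u0 v0 w0 A1 A2 B1 B2 T0
def iA1 : Vc := Sum.inl ⟨A1, by decide⟩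
def iA2 : Vc := Sum.inl ⟨A2, by decide⟩
def iB1 : Vc := Sum.inl ⟨B1, by decide⟩
def iB2 : Vc := Sum.inl ⟨B2, by decide⟩
def iT : Vc := Sum.inl ⟨T0, by decide⟩
def iX : Vc := Sum.inl ⟨X0, by decide⟩
def iY : Vc := Sum.inl ⟨Y0, by decide⟩

def cK : Sym2 Vc → ZMod 2 × ZMod 2 := fun e =>
  if e = s(iA1, (Sum.inr 0 : Vc)) then (0,1) else
  if e = s(iA2, (Sum.inr 1 : Vc)) then (0,1) else
  if e = s(iB1, (Sum.inr 2 : Vc)) then (0,1) else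
  if e = s(iB2, (Sum.inr 3 : Vc)) then (1,0) else
  if e = s(iT, (Sum.inr 4 : Vc)) then (1,1) else
  if e = s(iX, iB2) then (0,1) else
  if e = s(iX, iA2) then (1,1) else
  if e = s(iX, iT) then (1,0) else
  if e = s(iB1, iY) then (1,1) else
  if e = s(iB1, iA2) then (1,0) else
  if e = s(iA1, iY) then (1,0) else
  if e = s(iA1, iB2) then (1,1) else
  if e = s(iY, iT) then (0,1) else
  0

set_option maxHeartbeats 16000000 in
set_option maxRecDepth 100000 in
set_option synthInstance.maxSize 5000 in
set_option synthInstance.maxHeartbeats 2000000 in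
lemma cK_proper : IsProperK4EdgeColoring Gc cK := by
  constructor
  · decide
  · decide

abbrev K := ZMod 2 × ZMod 2
set_option maxHeartbeats 4000000 in
set_option synthInstance.maxSize 2000 in
set_option synthInstance.maxHeartbeats 1000000 in
set_option maxRecDepth 10000 in
lemma core : ∀ p0 : K, p0 ≠ 0 → ∀ i6 : K, i6 ≠ 0 → i6 ≠ p0 →
    ∀ i7 : K, i7 ≠ 0 → i7 ≠ p0 → i7 ≠ i6 →
    ∀ i4 : K, i4 ≠ 0 → i4 ≠ i6 →
    ∀ i8 : K, i8 ≠ 0 → i8 ≠ i6 → i8 ≠ i4 →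
    ∀ p2 : K, p2 ≠ 0 → p2 ≠ i4 →
    ∀ i5 : K, i5 ≠ 0 → i5 ≠ i4 → i5 ≠ p2 →
    ∀ i2 : K, i2 ≠ 0 → i2 ≠ i5 →
    ∀ p1 : K, p1 ≠ 0 → p1 ≠ i2 → p1 ≠ i5 →
    ∀ i1 : K, i1 ≠ 0 → i1 ≠ i7 → i1 ≠ i2 →
    ∀ p3 : K, p3 ≠ 0 → p3 ≠ i1 → p3 ≠ i7 →
    ∀ i3 : K, i3 ≠ 0 → i3 ≠ i1 → i3 ≠ i2 → i3 ≠ i8 →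
    ∀ p4 : K, p4 ≠ 0 → p4 ≠ i3 → p4 ≠ i8 →
    Xor' (p0 = p1 ∧ p2 ≠ p3 ∧ p4 = p2 + p3) (p2 = p3 ∧ p0 ≠ p1 ∧ p4 = p0 + p1) := by
  unfold Xor'
  decide
set_option maxHeartbeats 4000000 in
set_option maxRecDepth 100000 in
lemma canonB (c : Sym2 Vc → ZMod 2 × ZMod 2)
    (hnz : ∀ e ∈ Gc.edgeSet, c e ≠ 0)
    (hne : ∀ e₁ e₂ : Sym2 Vc, e₁ ∈ Gc.edgeSet → e₂ ∈ Gc.edgeSet → e₁ ≠ e₂ →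
      (∃ v, v ∈ e₁ ∧ v ∈ e₂) → c e₁ ≠ c e₂) :
    Xor' (c s(iA1, (Sum.inr 0 : Vc)) = c s(iA2, (Sum.inr 1 : Vc)) ∧
          c s(iB1, (Sum.inr 2 : Vc)) ≠ c s(iB2, (Sum.inr 3 : Vc)) ∧
          c s(iT, (Sum.inr 4 : Vc)) = c s(iB1, (Sum.inr 2 : Vc)) + c s(iB2, (Sum.inr 3 : Vc)))
         (c s(iB1, (Sum.inr 2 : Vc)) = c s(iB2, (Sum.inr 3 : Vc)) ∧
          c s(iA1, (Sum.inr 0 : Vc)) ≠ c s(iA2, (Sum.inr 1 : Vc)) ∧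
          c s(iT, (Sum.inr 4 : Vc)) = c s(iA1, (Sum.inr 0 : Vc)) + c s(iA2, (Sum.inr 1 : Vc))) := by
  have mp0 : s(iA1, (Sum.inr 0 : Vc)) ∈ Gc.edgeSet := by decide
  have mp1 : s(iA2, (Sum.inr 1 : Vc)) ∈ Gc.edgeSet := by decide
  have mp2 : s(iB1, (Sum.inr 2 : Vc)) ∈ Gc.edgeSet := by decide
  have mp3 : s(iB2, (Sum.inr 3 : Vc)) ∈ Gc.edgeSet := by decide
  have mp4 : s(iT, (Sum.inr 4 : Vc)) ∈ Gc.edgeSet := by decide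
  have mi1 : s(iX, iB2) ∈ Gc.edgeSet := by decide
  have mi2 : s(iX, iA2) ∈ Gc.edgeSet := by decide
  have mi3 : s(iX, iT) ∈ Gc.edgeSet := by decide
  have mi4 : s(iB1, iY) ∈ Gc.edgeSet := by decide
  have mi5 : s(iB1, iA2) ∈ Gc.edgeSet := by decide
  have mi6 : s(iA1, iY) ∈ Gc.edgeSet := by decide
  have mi7 : s(iA1, iB2) ∈ Gc.edgeSet := by decide
  have mi8 : s(iY, iT) ∈ Gc.edgeSet := by decide
  have np0 : c s(iA1, (Sum.inr 0 : Vc)) ≠ 0 := hnz _ mp0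
  have np1 : c s(iA2, (Sum.inr 1 : Vc)) ≠ 0 := hnz _ mp1
  have np2 : c s(iB1, (Sum.inr 2 : Vc)) ≠ 0 := hnz _ mp2
  have np3 : c s(iB2, (Sum.inr 3 : Vc)) ≠ 0 := hnz _ mp3
  have np4 : c s(iT, (Sum.inr 4 : Vc)) ≠ 0 := hnz _ mp4
  have ni1 : c s(iX, iB2) ≠ 0 := hnz _ mi1
  have ni2 : c s(iX, iA2) ≠ 0 := hnz _ mi2
  have ni3 : c s(iX, iT) ≠ 0 := hnz _ mi3
  have ni4 : c s(iB1, iY) ≠ 0 := hnz _ mi4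
  have ni5 : c s(iB1, iA2) ≠ 0 := hnz _ mi5
  have ni6 : c s(iA1, iY) ≠ 0 := hnz _ mi6
  have ni7 : c s(iA1, iB2) ≠ 0 := hnz _ mi7
  have ni8 : c s(iY, iT) ≠ 0 := hnz _ mi8
  have di6p0 : c s(iA1, iY) ≠ c s(iA1, (Sum.inr 0 : Vc)) := hne _ _ mi6 mp0 (by decide) ⟨iA1, by decide, by decide⟩
  have di7p0 : c s(iA1, iB2) ≠ c s(iA1, (Sum.inr 0 : Vc)) := hne _ _ mi7 mp0 (by decide) ⟨iA1, by decide, by decide⟩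
  have di7i6 : c s(iA1, iB2) ≠ c s(iA1, iY) := hne _ _ mi7 mi6 (by decide) ⟨iA1, by decide, by decide⟩
  have di4i6 : c s(iB1, iY) ≠ c s(iA1, iY) := hne _ _ mi4 mi6 (by decide) ⟨iY, by decide, by decide⟩
  have di8i6 : c s(iY, iT) ≠ c s(iA1, iY) := hne _ _ mi8 mi6 (by decide) ⟨iY, by decide, by decide⟩
  have di8i4 : c s(iY, iT) ≠ c s(iB1, iY) := hne _ _ mi8 mi4 (by decide) ⟨iY, by decide, by decide⟩
  have dp2i4 : c s(iB1, (Sum.inr 2 : Vc)) ≠ c s(iB1, iY) := hne _ _ mp2 mi4 (by decide) ⟨iB1, by decide, by decide⟩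
  have di5i4 : c s(iB1, iA2) ≠ c s(iB1, iY) := hne _ _ mi5 mi4 (by decide) ⟨iB1, by decide, by decide⟩
  have di5p2 : c s(iB1, iA2) ≠ c s(iB1, (Sum.inr 2 : Vc)) := hne _ _ mi5 mp2 (by decide) ⟨iB1, by decide, by decide⟩
  have di2i5 : c s(iX, iA2) ≠ c s(iB1, iA2) := hne _ _ mi2 mi5 (by decide) ⟨iA2, by decide, by decide⟩
  have dp1i2 : c s(iA2, (Sum.inr 1 : Vc)) ≠ c s(iX, iA2) := hne _ _ mp1 mi2 (by decide) ⟨iA2, by decide, by decide⟩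
  have dp1i5 : c s(iA2, (Sum.inr 1 : Vc)) ≠ c s(iB1, iA2) := hne _ _ mp1 mi5 (by decide) ⟨iA2, by decide, by decide⟩
  have di1i7 : c s(iX, iB2) ≠ c s(iA1, iB2) := hne _ _ mi1 mi7 (by decide) ⟨iB2, by decide, by decide⟩
  have di1i2 : c s(iX, iB2) ≠ c s(iX, iA2) := hne _ _ mi1 mi2 (by decide) ⟨iX, by decide, by decide⟩
  have dp3i1 : c s(iB2, (Sum.inr 3 : Vc)) ≠ c s(iX, iB2) := hne _ _ mp3 mi1 (by decide) ⟨iB2, by decide, by decide⟩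
  have dp3i7 : c s(iB2, (Sum.inr 3 : Vc)) ≠ c s(iA1, iB2) := hne _ _ mp3 mi7 (by decide) ⟨iB2, by decide, by decide⟩
  have di3i1 : c s(iX, iT) ≠ c s(iX, iB2) := hne _ _ mi3 mi1 (by decide) ⟨iX, by decide, by decide⟩
  have di3i2 : c s(iX, iT) ≠ c s(iX, iA2) := hne _ _ mi3 mi2 (by decide) ⟨iX, by decide, by decide⟩
  have di3i8 : c s(iX, iT) ≠ c s(iY, iT) := hne _ _ mi3 mi8 (by decide) ⟨iT, by decide, by decide⟩
  have dp4i3 : c s(iT, (Sum.inr 4 : Vc)) ≠ c s(iX, iT) := hne _ _ mp4 mi3 (by decide) ⟨iT, by decide, by decide⟩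
  have dp4i8 : c s(iT, (Sum.inr 4 : Vc)) ≠ c s(iY, iT) := hne _ _ mp4 mi8 (by decide) ⟨iT, by decide, by decide⟩
  exact core _ np0 _ ni6 di6p0 _ ni7 di7p0 di7i6 _ ni4 di4i6 _ ni8 di8i6 di8i4 _ np2 dp2i4 _ ni5 di5i4 di5p2 _ ni2 di2i5 _ np1 dp1i2 dp1i5 _ ni1 di1i7 di1i2 _ np3 dp3i1 dp3i7 _ ni3 di3i1 di3i2 di3i8 _ np4 dp4i3 dp4i8

set_option maxHeartbeats 16000000 in
set_option maxRecDepth 100000 in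
set_option synthInstance.maxSize 5000 in
set_option synthInstance.maxHeartbeats 2000000 in
lemma existsImages :
  ∀ u v : PetersenVert, petersen.Adj u v → ∀ w, petersen.Adj v w → u ≠ w →
    ∀ a1, petersen.Adj u a1 → a1 ≠ v → ∀ a2, petersen.Adj u a2 → a2 ≠ a1 → a2 ≠ v →
    ∀ b1, petersen.Adj w b1 → b1 ≠ v → ∀ b2, petersen.Adj w b2 → b2 ≠ b1 → b2 ≠ v →
    ∀ t, petersen.Adj v t → t ≠ u → t ≠ w →
    ∃ x0 x1 : Fin 5, v.1 = {x0, x1} ∧ ∃ x2 x3 : Fin 5, u.1 = {x2, x3} ∧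
    ∃ x4 : Fin 5, w.1 = {x2, x4} ∧ a1.1 = {x0, x4} ∧ a2.1 = {x1, x4} ∧ t.1 = {x3, x4} ∧
      ((b1.1 = {x0, x3} ∧ b2.1 = {x1, x3}) ∨ (b1.1 = {x1, x3} ∧ b2.1 = {x0, x3})) := by
  decide

lemma pair_ne {a b : Fin 5} (h : ({a, b} : Finset (Fin 5)).card = 2) : a ≠ b := by
  rintro rfl; simp at h

lemma disj_ne {s t : Finset (Fin 5)} (h : Disjoint s t) {a b : Fin 5}
    (ha : a ∈ s) (hb : b ∈ t) : a ≠ b := by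
  rintro rfl; exact Finset.disjoint_left.mp h ha hb

/-- The pole `N` is colourable, and every proper 3-edge-colouring with colours the
nonzero elements of `Z2 × Z2` satisfies exactly one of: (i) the dangling edges at
`a1, a2` get equal colours, those at `b1, b2` get distinct colours, and the dangling
edge at `t` gets their sum; or (ii) the same with the roles of `a1, a2` and `b1, b2`
exchanged. -/
theorem poleN_coloring (u v w a1 a2 b1 b2 t : PetersenVert)
    (huv : petersen.Adj u v) (hvw : petersen.Adj v w) (huw : u ≠ w)
    (ha1 : petersen.Adj u a1) (ha2 : petersen.Adj u a2) (ha12 : a1 ≠ a2)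
    (ha1v : a1 ≠ v) (ha2v : a2 ≠ v) (ha1w : a1 ≠ w) (ha2w : a2 ≠ w)
    (hb1 : petersen.Adj w b1) (hb2 : petersen.Adj w b2) (hb12 : b1 ≠ b2)
    (hb1v : b1 ≠ v) (hb2v : b2 ≠ v) (hb1u : b1 ≠ u) (hb2u : b2 ≠ u)
    (ht : petersen.Adj v t) (htu : t ≠ u) (htw : t ≠ w) :
    ThreeEdgeColorable (poleN u v w a1 a2 b1 b2 t) ∧
    ∀ c : Sym2 ({z : PetersenVert // z ≠ u ∧ z ≠ v ∧ z ≠ w} ⊕ Fin 5) → ZMod 2 × ZMod 2,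
      IsProperK4EdgeColoring (poleN u v w a1 a2 b1 b2 t) c →
      Xor'
        (c s(Sum.inl ⟨a1, ha1.ne', ha1v, ha1w⟩, Sum.inr 0) =
            c s(Sum.inl ⟨a2, ha2.ne', ha2v, ha2w⟩, Sum.inr 1) ∧
          c s(Sum.inl ⟨b1, hb1u, hb1v, hb1.ne'⟩, Sum.inr 2) ≠
            c s(Sum.inl ⟨b2, hb2u, hb2v, hb2.ne'⟩, Sum.inr 3) ∧
          c s(Sum.inl ⟨t, htu, ht.ne', htw⟩, Sum.inr 4) =
            c s(Sum.inl ⟨b1, hb1u, hb1v, hb1.ne'⟩, Sum.inr 2) +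
              c s(Sum.inl ⟨b2, hb2u, hb2v, hb2.ne'⟩, Sum.inr 3))
        (c s(Sum.inl ⟨b1, hb1u, hb1v, hb1.ne'⟩, Sum.inr 2) =
            c s(Sum.inl ⟨b2, hb2u, hb2v, hb2.ne'⟩, Sum.inr 3) ∧
          c s(Sum.inl ⟨a1, ha1.ne', ha1v, ha1w⟩, Sum.inr 0) ≠
            c s(Sum.inl ⟨a2, ha2.ne', ha2v, ha2w⟩, Sum.inr 1) ∧
          c s(Sum.inl ⟨t, htu, ht.ne', htw⟩, Sum.inr 4) =
            c s(Sum.inl ⟨a1, ha1.ne', ha1v, ha1w⟩, Sum.inr 0) +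
              c s(Sum.inl ⟨a2, ha2.ne', ha2v, ha2w⟩, Sum.inr 1)) := by
  obtain ⟨x0, x1, hv, x2, x3, hu, x4, hw, hA1e, hA2e, hT0e, hB⟩ :=
    existsImages u v huv w hvw huw a1 ha1 ha1v a2 ha2 ha12.symm ha2v
      b1 hb1 hb1v b2 hb2 hb12.symm hb2v t ht htu htw
  -- distinctness of the five images
  have n01 : x0 ≠ x1 := pair_ne (hv ▸ v.2)
  have n23 : x2 ≠ x3 := pair_ne (hu ▸ u.2)
  have n24 : x2 ≠ x4 := pair_ne (hw ▸ w.2)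
  have n34 : x3 ≠ x4 := pair_ne (hT0e ▸ t.2)
  have n04 : x0 ≠ x4 := pair_ne (hA1e ▸ a1.2)
  have n14 : x1 ≠ x4 := pair_ne (hA2e ▸ a2.2)
  have hduv : Disjoint (u : Finset (Fin 5)) (v : Finset (Fin 5)) := huv
  have m0v : x0 ∈ (v : Finset (Fin 5)) := by rw [hv]; simp
  have m1v : x1 ∈ (v : Finset (Fin 5)) := by rw [hv]; simp
  have m2u : x2 ∈ (u : Finset (Fin 5)) := by rw [hu]; simp
  have m3u : x3 ∈ (u : Finset (Fin 5)) := by rw [hu]; simp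
  have m4w : x4 ∈ (w : Finset (Fin 5)) := by rw [hw]; simp
  have n20 : x2 ≠ x0 := disj_ne hduv m2u m0v
  have n21 : x2 ≠ x1 := disj_ne hduv m2u m1v
  have n30 : x3 ≠ x0 := disj_ne hduv m3u m0v
  have n31 : x3 ≠ x1 := disj_ne hduv m3u m1v
  have n40 : x4 ≠ x0 := disj_ne (hvw.symm : Disjoint (w : Finset (Fin 5)) _) m4w m0v
  have n41 : x4 ≠ x1 := disj_ne (hvw.symm : Disjoint (w : Finset (Fin 5)) _) m4w m1v
  -- the permutation of Fin 5
  set f : Fin 5 → Fin 5 := ![x0, x1, x2, x3, x4] with hf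
  have hinj : Function.Injective f := by
    intro a b hab
    fin_cases a <;> fin_cases b <;>
      first
        | rfl
        | exact absurd hab (by assumption)
        | exact absurd hab (Ne.symm (by assumption))
  -- the induced map on Petersen vertices
  have cardim : ∀ s : PetersenVert, ((s : Finset (Fin 5)).image f).card = 2 := fun s => by
    rw [Finset.card_image_of_injective _ hinj]; exact s.2
  set P : PetersenVert → PetersenVert := fun s => ⟨(s : Finset (Fin 5)).image f, cardim s⟩
    with hP
  have Pinj : Function.Injective P := fun s t h =>
    Subtype.ext (Finset.image_injective hinj (congrArg Subtype.val h))
  have Padj : ∀ x y : PetersenVert, petersen.Adj (P x) (P y) ↔ petersen.Adj x y := by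
    intro x y
    show Disjoint _ _ ↔ Disjoint _ _
    exact Finset.disjoint_image hinj
  have img_pair : ∀ a b : Fin 5, ({a, b} : Finset (Fin 5)).image f = {f a, f b} := by
    intro a b; simp [Finset.image_insert]
  have Pu : P u0 = u := Subtype.ext (by rw [hP]; exact (img_pair 2 3).trans hu.symm)
  have Pv : P v0 = v := Subtype.ext (by rw [hP]; exact (img_pair 0 1).trans hv.symm)
  have Pw : P w0 = w := Subtype.ext (by rw [hP]; exact (img_pair 2 4).trans hw.symm)
  have PA1 : P A1 = a1 := Subtype.ext (by rw [hP]; exact (img_pair 0 4).trans hA1e.symm)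
  have PA2 : P A2 = a2 := Subtype.ext (by rw [hP]; exact (img_pair 1 4).trans hA2e.symm)
  have PT : P T0 = t := Subtype.ext (by rw [hP]; exact (img_pair 3 4).trans hT0e.symm)
  have pbij : Function.Bijective P := Finite.injective_iff_bijective.mp Pinj
  have hsub : ∀ z : PetersenVert, (z ≠ u0 ∧ z ≠ v0 ∧ z ≠ w0) ↔
      (P z ≠ u ∧ P z ≠ v ∧ P z ≠ w) := by
    intro z
    rw [← Pu, ← Pv, ← Pw, Pinj.ne_iff, Pinj.ne_iff, Pinj.ne_iff]
  rcases hB with ⟨hB1e, hB2e⟩ | ⟨hB1e, hB2e⟩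
  · -- identity pendant relabelling
    have PB1 : P B1 = b1 := Subtype.ext (by rw [hP]; exact (img_pair 0 3).trans hB1e.symm)
    have PB2 : P B2 = b2 := Subtype.ext (by rw [hP]; exact (img_pair 1 3).trans hB2e.symm)
    set eqv : Vc ≃ ({z : PetersenVert // z ≠ u ∧ z ≠ v ∧ z ≠ w} ⊕ Fin 5) :=
      Equiv.sumCongr ((Equiv.ofBijective P pbij).subtypeEquiv hsub) (Equiv.refl (Fin 5))
      with heqv
    have hmatch : ∀ (z : {z' : PetersenVert // z' ≠ u0 ∧ z' ≠ v0 ∧ z' ≠ w0}) (k : Fin 5),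
        ((k = 0 ∧ z.1 = A1) ∨ (k = 1 ∧ z.1 = A2) ∨ (k = 2 ∧ z.1 = B1) ∨
          (k = 3 ∧ z.1 = B2) ∨ (k = 4 ∧ z.1 = T0)) ↔
        ((k = 0 ∧ P z.1 = a1) ∨ (k = 1 ∧ P z.1 = a2) ∨ (k = 2 ∧ P z.1 = b1) ∨
          (k = 3 ∧ P z.1 = b2) ∨ (k = 4 ∧ P z.1 = t)) := by
      intro z k
      rw [← PA1, ← PA2, ← PB1, ← PB2, ← PT]
      exact or_congr (and_congr Iff.rfl Pinj.eq_iff.symm) (or_congr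
        (and_congr Iff.rfl Pinj.eq_iff.symm) (or_congr (and_congr Iff.rfl Pinj.eq_iff.symm)
        (or_congr (and_congr Iff.rfl Pinj.eq_iff.symm) (and_congr Iff.rfl Pinj.eq_iff.symm))))
    have hadj : ∀ p q : Vc, Gc.Adj p q ↔
        (poleN u v w a1 a2 b1 b2 t).Adj (eqv p) (eqv q) := by
      intro p q
      rcases p with x | k <;> rcases q with y | l
      · exact and_congr eqv.injective.ne_iff.symm
          (or_congr (Padj x.1 y.1).symm (Padj y.1 x.1).symm)
      · exact and_congr eqv.injective.ne_iff.symm (or_congr (hmatch x l) Iff.rfl)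
      · exact and_congr eqv.injective.ne_iff.symm (or_congr Iff.rfl (hmatch y k))
      · exact and_congr eqv.injective.ne_iff.symm (or_congr Iff.rfl Iff.rfl)
    refine ⟨threeEdgeColorable_transfer eqv hadj (k4_to_three cK_proper), ?_⟩
    intro c hc
    have hc' := properK4_pullback eqv hadj hc
    have X := canonB _ hc'.1 hc'.2
    have eA1 : eqv iA1 = Sum.inl ⟨a1, ha1.ne', ha1v, ha1w⟩ :=
      congrArg Sum.inl (Subtype.ext PA1)
    have eA2 : eqv iA2 = Sum.inl ⟨a2, ha2.ne', ha2v, ha2w⟩ :=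
      congrArg Sum.inl (Subtype.ext PA2)
    have eB1 : eqv iB1 = Sum.inl ⟨b1, hb1u, hb1v, hb1.ne'⟩ :=
      congrArg Sum.inl (Subtype.ext PB1)
    have eB2 : eqv iB2 = Sum.inl ⟨b2, hb2u, hb2v, hb2.ne'⟩ :=
      congrArg Sum.inl (Subtype.ext PB2)
    have eT : eqv iT = Sum.inl ⟨t, htu, ht.ne', htw⟩ :=
      congrArg Sum.inl (Subtype.ext PT)
    have er : ∀ k : Fin 5, eqv (Sum.inr k) = Sum.inr k := fun k => rfl
    simp only [Sym2.map_pair_eq, eA1, eA2, eB1, eB2, eT, er] at X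
    exact X
  · -- pendants 2 and 3 exchanged
    have PB1 : P B1 = b2 := Subtype.ext (by rw [hP]; exact (img_pair 0 3).trans hB2e.symm)
    have PB2 : P B2 = b1 := Subtype.ext (by rw [hP]; exact (img_pair 1 3).trans hB1e.symm)
    set eqv : Vc ≃ ({z : PetersenVert // z ≠ u ∧ z ≠ v ∧ z ≠ w} ⊕ Fin 5) :=
      Equiv.sumCongr ((Equiv.ofBijective P pbij).subtypeEquiv hsub) (Equiv.swap 2 3)
      with heqv
    have hmatch : ∀ (z : {z' : PetersenVert // z' ≠ u0 ∧ z' ≠ v0 ∧ z' ≠ w0}) (k : Fin 5),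
        ((k = 0 ∧ z.1 = A1) ∨ (k = 1 ∧ z.1 = A2) ∨ (k = 2 ∧ z.1 = B1) ∨
          (k = 3 ∧ z.1 = B2) ∨ (k = 4 ∧ z.1 = T0)) ↔
        ((Equiv.swap (2 : Fin 5) 3 k = 0 ∧ P z.1 = a1) ∨ (Equiv.swap (2 : Fin 5) 3 k = 1 ∧ P z.1 = a2) ∨
          (Equiv.swap (2 : Fin 5) 3 k = 2 ∧ P z.1 = b1) ∨ (Equiv.swap (2 : Fin 5) 3 k = 3 ∧ P z.1 = b2) ∨
          (Equiv.swap (2 : Fin 5) 3 k = 4 ∧ P z.1 = t)) := by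
      intro z k
      rw [← PA1, ← PA2, ← PB1, ← PB2, ← PT]
      fin_cases k <;>
        simp [Equiv.swap_apply_def, Pinj.eq_iff, show (2:Fin 5) ≠ 3 by decide,
          show (0:Fin 5) ≠ 2 by decide, show (0:Fin 5) ≠ 3 by decide,
          show (1:Fin 5) ≠ 2 by decide, show (1:Fin 5) ≠ 3 by decide,
          show (4:Fin 5) ≠ 2 by decide, show (4:Fin 5) ≠ 3 by decide]
    have hadj : ∀ p q : Vc, Gc.Adj p q ↔
        (poleN u v w a1 a2 b1 b2 t).Adj (eqv p) (eqv q) := by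
      intro p q
      rcases p with x | k <;> rcases q with y | l
      · exact and_congr eqv.injective.ne_iff.symm
          (or_congr (Padj x.1 y.1).symm (Padj y.1 x.1).symm)
      · exact and_congr eqv.injective.ne_iff.symm (or_congr (hmatch x l) Iff.rfl)
      · exact and_congr eqv.injective.ne_iff.symm (or_congr Iff.rfl (hmatch y k))
      · exact and_congr eqv.injective.ne_iff.symm (or_congr Iff.rfl Iff.rfl)
    refine ⟨threeEdgeColorable_transfer eqv hadj (k4_to_three cK_proper), ?_⟩
    intro c hc
    have hc' := properK4_pullback eqv hadj hc
    have X := canonB _ hc'.1 hc'.2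
    have eA1 : eqv iA1 = Sum.inl ⟨a1, ha1.ne', ha1v, ha1w⟩ :=
      congrArg Sum.inl (Subtype.ext PA1)
    have eA2 : eqv iA2 = Sum.inl ⟨a2, ha2.ne', ha2v, ha2w⟩ :=
      congrArg Sum.inl (Subtype.ext PA2)
    have eB1 : eqv iB1 = Sum.inl ⟨b2, hb2u, hb2v, hb2.ne'⟩ :=
      congrArg Sum.inl (Subtype.ext PB1)
    have eB2 : eqv iB2 = Sum.inl ⟨b1, hb1u, hb1v, hb1.ne'⟩ :=
      congrArg Sum.inl (Subtype.ext PB2)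
    have eT : eqv iT = Sum.inl ⟨t, htu, ht.ne', htw⟩ :=
      congrArg Sum.inl (Subtype.ext PT)
    have er0 : eqv (Sum.inr 0) = Sum.inr 0 := rfl
    have er1 : eqv (Sum.inr 1) = Sum.inr 1 := rfl
    have er2 : eqv (Sum.inr 2) = Sum.inr 3 := rfl
    have er3 : eqv (Sum.inr 3) = Sum.inr 2 := rfl
    have er4 : eqv (Sum.inr 4) = Sum.inr 4 := rfl
    simp only [Sym2.map_pair_eq, eA1, eA2, eB1, eB2, eT, er0, er1, er2, er3, er4] at X
    exact xor_congr X (and_congr Iff.rfl (and_congr ne_comm (by rw [add_comm])))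
      (and_congr eq_comm Iff.rfl)
end

section
/- Let P1 and P2 be disjoint copies of the Petersen graph. In P1 let u1 and v1 be adjacent, with a1, a2 the neighbours of u1 other than v1 and b1, b2 the neighbours of v1 other than u1; in P2 let u2 and v2 be adjacent, with c1, c2 the neighbours of u2 other than v2 and d1, d2 the neighbours of v2 other than u2. Form the graph Z3 as follows: take the disjoint union of P1 − {u1,v1} and P2 − {u2,v2}; add a new vertex s and the edges b1s, sc1 and b2c2; and add pendant vertices t*, a1*, a2*, d1*, d2* with edges st*, a1a1*, a2a2*, d1d1*, d2d2*. Then Z3 admits no proper 3-edge-colouring. (That is, the (2,2,1)-pole Z3, obtained from the junction I∘I of two isochromatic 4-poles by subdividing one connecting edge and attaching a dangling edge at the new vertex, satisfies ρ(Z3) ≥ 1.) -/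
/-- The (2,2,1)-pole `Z3`: two copies of the Petersen graph, each with an adjacent
pair of vertices (`u1, v1` resp. `u2, v2`) removed; a new vertex `s` (index `0` of
`Fin 6`) is joined to `b1` and `c1`, the edge `b2c2` is added, and pendant vertices
(indices `1,…,5` of `Fin 6`) are attached at `s, a1, a2, d1, d2`. -/
def poleZ3 (u1 v1 a1 a2 b1 b2 u2 v2 c1 c2 d1 d2 : PetersenVert) :
    SimpleGraph ({x : PetersenVert // x ≠ u1 ∧ x ≠ v1} ⊕
      ({x : PetersenVert // x ≠ u2 ∧ x ≠ v2} ⊕ Fin 6)) :=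
  SimpleGraph.fromRel (fun p q =>
    match p, q with
    | Sum.inl x, Sum.inl y => petersen.Adj x.1 y.1
    | Sum.inr (Sum.inl x), Sum.inr (Sum.inl y) => petersen.Adj x.1 y.1
    | Sum.inl x, Sum.inr (Sum.inl y) => x.1 = b2 ∧ y.1 = c2
    | Sum.inl x, Sum.inr (Sum.inr k) =>
        (k = 0 ∧ x.1 = b1) ∨ (k = 2 ∧ x.1 = a1) ∨ (k = 3 ∧ x.1 = a2)
    | Sum.inr (Sum.inl y), Sum.inr (Sum.inr k) =>
        (k = 0 ∧ y.1 = c1) ∨ (k = 4 ∧ y.1 = d1) ∨ (k = 5 ∧ y.1 = d2)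
    | Sum.inr (Sum.inr k), Sum.inr (Sum.inr l) => k = 0 ∧ l = 1
    | _, _ => False)

/- ## Search machinery -/
namespace Z3Aux

variable {V : Type*} [DecidableEq V]

def shares (p q : V × V) : Bool :=
  decide (p.1 = q.1) || decide (p.1 = q.2) || decide (p.2 = q.1) || decide (p.2 = q.2)

def same (p q : V × V) : Bool :=
  (decide (p.1 = q.1) && decide (p.2 = q.2)) || (decide (p.1 = q.2) && decide (p.2 = q.1))

theorem same_iff (p q : V × V) : same p q = true ↔ Sym2.mk p.1 p.2 = Sym2.mk q.1 q.2 := by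
  cases p; cases q
  simp only [same, Bool.or_eq_true, Bool.and_eq_true, decide_eq_true_eq, Sym2.mk, Sym2.eq_iff]

theorem shares_spec (p q : V × V) (h : shares p q = true) :
    ∃ v, v ∈ Sym2.mk p.1 p.2 ∧ v ∈ Sym2.mk q.1 q.2 := by
  cases p with | mk a b => cases q with | mk a' b' =>
  simp [shares] at h
  rcases h with (((h|h)|h)|h) <;> subst h <;> simp [Sym2.mem_iff]

def compat (asg : List ((V × V) × Fin 3)) (e : V × V) (x : Fin 3) : Bool :=
  asg.all fun px => !(shares e px.1) || same e px.1 || !(decide (x = px.2))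

def search : List (V × V) → List ((V × V) × Fin 3) → Bool
  | [], _ => true
  | e :: r, asg => (List.finRange 3).any fun x => compat asg e x && search r ((e, x) :: asg)

def Good (c : Sym2 V → Fin 3) (L : List (V × V)) : Prop :=
  ∀ p ∈ L, ∀ q ∈ L, shares p q = true → Sym2.mk p.1 p.2 ≠ Sym2.mk q.1 q.2 →
    c (Sym2.mk p.1 p.2) ≠ c (Sym2.mk q.1 q.2)

theorem search_eq_true {c : Sym2 V → Fin 3} {L : List (V × V)} (hg : Good c L) :
    ∀ es asg, (∀ e ∈ es, e ∈ L) →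
      (∀ px ∈ asg, px.1 ∈ L ∧ c (Sym2.mk px.1.1 px.1.2) = px.2) →
      search es asg = true := by
  intro es
  induction es with
  | nil => intro asg _ _; rfl
  | cons e r ih =>
    intro asg hes hasg
    have he : e ∈ L := hes e List.mem_cons_self
    simp only [search, List.any_eq_true]
    refine ⟨c (Sym2.mk e.1 e.2), List.mem_finRange _, ?_⟩
    rw [Bool.and_eq_true]
    constructor
    · simp only [compat, List.all_eq_true]
      intro px hpx
      rcases hasg px hpx with ⟨hL, hcpx⟩
      by_cases hs : shares e px.1 = true
      · by_cases hmk : Sym2.mk e.1 e.2 = Sym2.mk px.1.1 px.1.2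
        · have : same e px.1 = true := (same_iff _ _).mpr hmk
          simp [this]
        · have hne := hg e he px.1 hL hs hmk
          rw [hcpx] at hne
          simp [hne]
      · simp [Bool.eq_false_iff.mpr hs]
    · refine ih ((e, c (Sym2.mk e.1 e.2)) :: asg)
        (fun x hx => hes x (List.mem_cons_of_mem _ hx)) ?_
      intro px hpx
      rcases List.mem_cons.mp hpx with h | h
      · subst h; exact ⟨he, rfl⟩
      · exact hasg px h

def L0 : List (Fin 12 × Fin 12) :=
  [(2,10),(5,11),(2,3),(2,4),(0,4),(0,5),(1,5),(0,7),(3,7),(1,3),(1,6),(4,6)]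

set_option maxRecDepth 100000 in
theorem searches_fail : ∀ x y : Fin 3, x ≠ y →
    search (L0.drop 2) [((2,10),x),((5,11),y)] = false := by decide

theorem key {c : Sym2 (Fin 12) → Fin 3} (hg : Good c L0) :
    c (Sym2.mk 2 10) = c (Sym2.mk 5 11) := by
  by_contra hne
  have ht := search_eq_true hg (L0.drop 2)
      [((2,10), c (Sym2.mk 2 10)), ((5,11), c (Sym2.mk 5 11))]
      (fun e he => List.drop_subset _ _ he)
      (by
        have m1 : ((2,10) : Fin 12 × Fin 12) ∈ L0 := by decide
        have m2 : ((5,11) : Fin 12 × Fin 12) ∈ L0 := by decide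
        intro px hpx
        rcases List.mem_cons.mp hpx with h | h
        · subst h; exact ⟨m1, rfl⟩
        · rcases List.mem_cons.mp h with h | h
          · subst h; exact ⟨m2, rfl⟩
          · simp at h)
  have hf := searches_fail _ _ hne
  rw [ht] at hf
  exact absurd hf (by simp)

end Z3Aux

/- ## Sym2 helpers -/

theorem map_mk {α β : Type*} (f : α → β) (p : α × α) :
    Sym2.map f (Sym2.mk p.1 p.2) = Sym2.mk (f p.1) (f p.2) := by
  cases p; rfl

theorem mem_map_pair {α β : Type*} (f : α → β) (v : α) (p : α × α) (h : v ∈ Sym2.mk p.1 p.2) :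
    f v ∈ Sym2.mk (f p.1) (f p.2) := by
  cases p
  rw [Sym2.mem_iff] at h ⊢
  rcases h with h | h <;> simp [h]

theorem mk_map_ne {α β : Type*} {f : α → β} (hf : Function.Injective f) {p q : α × α}
    (h : Sym2.mk p.1 p.2 ≠ Sym2.mk q.1 q.2) : Sym2.mk (f p.1) (f p.2) ≠ Sym2.mk (f q.1) (f q.2) := by
  intro hcon
  apply h
  cases p; cases q
  rw [Sym2.eq_iff] at hcon ⊢
  rcases hcon with ⟨h1, h2⟩ | ⟨h1, h2⟩
  · exact Or.inl ⟨hf h1, hf h2⟩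
  · exact Or.inr ⟨hf h1, hf h2⟩

/- ## The permutation action on Petersen vertices -/

def pact (σ : Equiv.Perm (Fin 5)) (x : PetersenVert) : PetersenVert :=
  ⟨x.1.image σ, by rw [Finset.card_image_of_injective _ σ.injective, x.2]⟩

theorem pact_inj (σ : Equiv.Perm (Fin 5)) {x y : PetersenVert} (h : pact σ x = pact σ y) :
    x = y :=
  Subtype.ext (Finset.image_injective σ.injective (congrArg Subtype.val h))

theorem pact_pair (σ : Equiv.Perm (Fin 5)) (i j : Fin 5) (h : ({i, j} : Finset (Fin 5)).card = 2) :
    (pact σ ⟨{i, j}, h⟩).1 = {σ i, σ j} := by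
  simp [pact, Finset.image_insert, Finset.image_singleton]

/- ## Canonical vertices of Petersen minus two adjacent vertices -/

def vs : Fin 8 → PetersenVert :=
  ![⟨{0,2}, by decide⟩, ⟨{0,3}, by decide⟩, ⟨{0,4}, by decide⟩, ⟨{1,2}, by decide⟩,
    ⟨{1,3}, by decide⟩, ⟨{1,4}, by decide⟩, ⟨{2,4}, by decide⟩, ⟨{3,4}, by decide⟩]

theorem vs_inj : ∀ i j : Fin 8, vs i = vs j → i = j := by decide

/- ## embedding of the 12 search-vertices -/

def embed {W : Type*} (k : Fin 8 → W) (p8 p9 p10 p11 : W) : Fin 12 → W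
  | ⟨0, _⟩ => k 0
  | ⟨1, _⟩ => k 1
  | ⟨2, _⟩ => k 2
  | ⟨3, _⟩ => k 3
  | ⟨4, _⟩ => k 4
  | ⟨5, _⟩ => k 5
  | ⟨6, _⟩ => k 6
  | ⟨7, _⟩ => k 7
  | ⟨8, _⟩ => p8
  | ⟨9, _⟩ => p9
  | ⟨10, _⟩ => p10
  | ⟨11, _⟩ => p11

theorem embed_inj {W : Type*} {k : Fin 8 → W} {p8 p9 p10 p11 : W}
    (hk : Function.Injective k)
    (h8 : ∀ i, k i ≠ p8) (h9 : ∀ i, k i ≠ p9) (h10 : ∀ i, k i ≠ p10) (h11 : ∀ i, k i ≠ p11)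
    (h89 : p8 ≠ p9) (h810 : p8 ≠ p10) (h811 : p8 ≠ p11) (h910 : p9 ≠ p10)
    (h911 : p9 ≠ p11) (h1011 : p10 ≠ p11) :
    Function.Injective (embed k p8 p9 p10 p11) := by
  intro i j h
  fin_cases i <;> fin_cases j <;>
    first
      | rfl
      | exact absurd (hk h) (by decide)
      | exact absurd h (h8 _) | exact absurd h.symm (h8 _)
      | exact absurd h (h9 _) | exact absurd h.symm (h9 _)
      | exact absurd h (h10 _) | exact absurd h.symm (h10 _)
      | exact absurd h (h11 _) | exact absurd h.symm (h11 _)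
      | exact absurd h h89 | exact absurd h.symm h89
      | exact absurd h h810 | exact absurd h.symm h810
      | exact absurd h h811 | exact absurd h.symm h811
      | exact absurd h h910 | exact absurd h.symm h910
      | exact absurd h h911 | exact absurd h.symm h911
      | exact absurd h h1011 | exact absurd h.symm h1011
theorem mk_perm (p0 p1 p2 p3 p4 : Fin 5) (h01 : p0 ≠ p1) (h02 : p0 ≠ p2)
    (h03 : p0 ≠ p3) (h04 : p0 ≠ p4) (h12 : p1 ≠ p2) (h13 : p1 ≠ p3) (h14 : p1 ≠ p4)
    (h23 : p2 ≠ p3) (h24 : p2 ≠ p4) (h34 : p3 ≠ p4) :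
    ∃ σ : Equiv.Perm (Fin 5), σ 0 = p0 ∧ σ 1 = p1 ∧ σ 2 = p2 ∧ σ 3 = p3 ∧ σ 4 = p4 := by
  have hinj : Function.Injective ![p0, p1, p2, p3, p4] := by
    intro i j hij
    fin_cases i <;> fin_cases j <;> simp_all
  refine ⟨Equiv.ofBijective _ (Finite.injective_iff_bijective.mp hinj), ?_, ?_, ?_, ?_, ?_⟩ <;> rfl

theorem exists_sigma (u v a1 a2 b1 b2 : PetersenVert)
    (huv : Disjoint u.1 v.1)
    (ha1 : Disjoint u.1 a1.1) (ha2 : Disjoint u.1 a2.1)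
    (ha12 : a1 ≠ a2) (ha1v : a1 ≠ v) (ha2v : a2 ≠ v)
    (hb1 : Disjoint v.1 b1.1) (hb2 : Disjoint v.1 b2.1)
    (hb12 : b1 ≠ b2) (hb1u : b1 ≠ u) (hb2u : b2 ≠ u) :
    ∃ σ : Equiv.Perm (Fin 5),
      u.1 = {σ 0, σ 1} ∧ v.1 = {σ 2, σ 3} ∧ a1.1 = {σ 2, σ 4} ∧ a2.1 = {σ 3, σ 4} ∧
      b1.1 = {σ 0, σ 4} ∧ b2.1 = {σ 1, σ 4} := by
  obtain ⟨e0, e1, h01, hu⟩ := Finset.card_eq_two.mp u.2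
  obtain ⟨e2, e3, h23, hv⟩ := Finset.card_eq_two.mp v.2
  have hm0 : e0 ∈ u.1 := by rw [hu]; simp
  have hm1 : e1 ∈ u.1 := by rw [hu]; simp
  have hm2 : e2 ∈ v.1 := by rw [hv]; simp
  have hm3 : e3 ∈ v.1 := by rw [hv]; simp
  have h02 : e0 ≠ e2 := fun h => Finset.disjoint_left.mp huv hm0 (h ▸ hm2)
  have h03 : e0 ≠ e3 := fun h => Finset.disjoint_left.mp huv hm0 (h ▸ hm3)
  have h12 : e1 ≠ e2 := fun h => Finset.disjoint_left.mp huv hm1 (h ▸ hm2)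
  have h13 : e1 ≠ e3 := fun h => Finset.disjoint_left.mp huv hm1 (h ▸ hm3)
  have hc4 : ({e0, e1, e2, e3} : Finset (Fin 5)).card = 4 := by
    rw [Finset.card_insert_of_notMem (by simp [h01, h02, h03]),
      Finset.card_insert_of_notMem (by simp [h12, h13]),
      Finset.card_insert_of_notMem (by simp [h23]), Finset.card_singleton]
  have hne : (({e0, e1, e2, e3} : Finset (Fin 5))ᶜ).Nonempty := by
    rw [← Finset.card_pos, Finset.card_compl, hc4]
    simp
  obtain ⟨w, hw⟩ := hne
  rw [Finset.mem_compl] at hw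
  simp only [Finset.mem_insert, Finset.mem_singleton, not_or] at hw
  obtain ⟨hw0, hw1, hw2, hw3⟩ := hw
  have hall : ∀ z : Fin 5, z = w ∨ z = e0 ∨ z = e1 ∨ z = e2 ∨ z = e3 := by
    intro z
    have huniv : (insert w {e0, e1, e2, e3} : Finset (Fin 5)) = Finset.univ := by
      apply Finset.eq_univ_of_card
      rw [Finset.card_insert_of_notMem (by simp [hw0, hw1, hw2, hw3]), hc4]
      simp
    have hz : z ∈ (insert w {e0, e1, e2, e3} : Finset (Fin 5)) := by
      rw [huniv]; exact Finset.mem_univ z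
    simpa using hz
  have step : ∀ (x : PetersenVert) (p q r s : Fin 5), Disjoint ({p, q} : Finset (Fin 5)) x.1 →
      (∀ z : Fin 5, z = w ∨ z = p ∨ z = q ∨ z = r ∨ z = s) → x.1 ≠ {r, s} →
      x.1 = {r, w} ∨ x.1 = {s, w} := by
    intro x p q r s hdisj hall' hxne
    obtain ⟨f, g, hfg, hx⟩ := Finset.card_eq_two.mp x.2
    have hfm : f ∈ x.1 := by rw [hx]; simp
    have hgm : g ∈ x.1 := by rw [hx]; simp
    have hf' : f = w ∨ f = r ∨ f = s := by
      rcases hall' f with h | h | h | h | h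
      · exact Or.inl h
      · exact absurd (h ▸ Finset.disjoint_right.mp hdisj hfm) (by simp)
      · exact absurd (h ▸ Finset.disjoint_right.mp hdisj hfm) (by simp)
      · exact Or.inr (Or.inl h)
      · exact Or.inr (Or.inr h)
    have hg' : g = w ∨ g = r ∨ g = s := by
      rcases hall' g with h | h | h | h | h
      · exact Or.inl h
      · exact absurd (h ▸ Finset.disjoint_right.mp hdisj hgm) (by simp)
      · exact absurd (h ▸ Finset.disjoint_right.mp hdisj hgm) (by simp)
      · exact Or.inr (Or.inl h)
      · exact Or.inr (Or.inr h)
    rcases hf' with rfl | rfl | rfl <;> rcases hg' with rfl | rfl | rfl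
    · exact absurd rfl hfg
    · left; rw [hx, Finset.pair_comm]
    · right; rw [hx, Finset.pair_comm]
    · left; exact hx
    · exact absurd rfl hfg
    · exact absurd hx hxne
    · right; exact hx
    · exact absurd (hx.trans (Finset.pair_comm _ _)) hxne
    · exact absurd rfl hfg
  rw [hu] at ha1 ha2
  rw [hv] at hb1 hb2
  have ha1' := step a1 e0 e1 e2 e3 ha1 hall
    (fun h => ha1v (Subtype.ext (h.trans hv.symm)))
  have ha2' := step a2 e0 e1 e2 e3 ha2 hall
    (fun h => ha2v (Subtype.ext (h.trans hv.symm)))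
  have hall2 : ∀ z : Fin 5, z = w ∨ z = e2 ∨ z = e3 ∨ z = e0 ∨ z = e1 := by
    intro z
    rcases hall z with h | h | h | h | h
    exacts [Or.inl h, Or.inr (Or.inr (Or.inr (Or.inl h))),
      Or.inr (Or.inr (Or.inr (Or.inr h))), Or.inr (Or.inl h), Or.inr (Or.inr (Or.inl h))]
  have hb1' := step b1 e2 e3 e0 e1 hb1 hall2
    (fun h => hb1u (Subtype.ext (h.trans hu.symm)))
  have hb2' := step b2 e2 e3 e0 e1 hb2 hall2
    (fun h => hb2u (Subtype.ext (h.trans hu.symm)))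
  have ha12' : a1.1 ≠ a2.1 := fun h => ha12 (Subtype.ext h)
  have hb12' : b1.1 ≠ b2.1 := fun h => hb12 (Subtype.ext h)
  rcases ha1' with hA1 | hA1 <;> rcases ha2' with hA2 | hA2 <;>
    rcases hb1' with hB1 | hB1 <;> rcases hb2' with hB2 | hB2
  all_goals first
    | (exact absurd (hA1.trans hA2.symm) ha12')
    | (exact absurd (hB1.trans hB2.symm) hb12')
    | skip
  · obtain ⟨σ, s0, s1, s2, s3, s4⟩ := mk_perm e0 e1 e2 e3 w h01 h02 h03
      (Ne.symm hw0) h12 h13 (Ne.symm hw1) h23 (Ne.symm hw2) (Ne.symm hw3)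
    exact ⟨σ, by rw [s0, s1]; exact hu, by rw [s2, s3]; exact hv,
      by rw [s2, s4]; exact hA1, by rw [s3, s4]; exact hA2,
      by rw [s0, s4]; exact hB1, by rw [s1, s4]; exact hB2⟩
  · obtain ⟨σ, s0, s1, s2, s3, s4⟩ := mk_perm e1 e0 e2 e3 w (Ne.symm h01) h12 h13
      (Ne.symm hw1) h02 h03 (Ne.symm hw0) h23 (Ne.symm hw2) (Ne.symm hw3)
    exact ⟨σ, by rw [s0, s1, Finset.pair_comm]; exact hu, by rw [s2, s3]; exact hv,
      by rw [s2, s4]; exact hA1, by rw [s3, s4]; exact hA2,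
      by rw [s0, s4]; exact hB1, by rw [s1, s4]; exact hB2⟩
  · obtain ⟨σ, s0, s1, s2, s3, s4⟩ := mk_perm e0 e1 e3 e2 w h01 h03 h02
      (Ne.symm hw0) h13 h12 (Ne.symm hw1) (Ne.symm h23) (Ne.symm hw3) (Ne.symm hw2)
    exact ⟨σ, by rw [s0, s1]; exact hu, by rw [s2, s3, Finset.pair_comm]; exact hv,
      by rw [s2, s4]; exact hA1, by rw [s3, s4]; exact hA2,
      by rw [s0, s4]; exact hB1, by rw [s1, s4]; exact hB2⟩
  · obtain ⟨σ, s0, s1, s2, s3, s4⟩ := mk_perm e1 e0 e3 e2 w (Ne.symm h01) h13 h12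
      (Ne.symm hw1) h03 h02 (Ne.symm hw0) (Ne.symm h23) (Ne.symm hw3) (Ne.symm hw2)
    exact ⟨σ, by rw [s0, s1, Finset.pair_comm]; exact hu, by rw [s2, s3, Finset.pair_comm]; exact hv,
      by rw [s2, s4]; exact hA1, by rw [s3, s4]; exact hA2,
      by rw [s0, s4]; exact hB1, by rw [s1, s4]; exact hB2⟩


/-- The (2,2,1)-pole `Z3`, obtained from the junction `I ∘ I` of two isochromatic
4-poles by subdividing one connecting edge and attaching a dangling edge at the new
vertex, admits no proper 3-edge-colouring. -/
theorem poleZ3_uncolourable (u1 v1 a1 a2 b1 b2 u2 v2 c1 c2 d1 d2 : PetersenVert)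
    (huv1 : petersen.Adj u1 v1)
    (ha1 : petersen.Adj u1 a1) (ha2 : petersen.Adj u1 a2)
    (ha12 : a1 ≠ a2) (ha1v : a1 ≠ v1) (ha2v : a2 ≠ v1)
    (hb1 : petersen.Adj v1 b1) (hb2 : petersen.Adj v1 b2)
    (hb12 : b1 ≠ b2) (hb1u : b1 ≠ u1) (hb2u : b2 ≠ u1)
    (huv2 : petersen.Adj u2 v2)
    (hc1 : petersen.Adj u2 c1) (hc2 : petersen.Adj u2 c2)
    (hc12 : c1 ≠ c2) (hc1v : c1 ≠ v2) (hc2v : c2 ≠ v2)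
    (hd1 : petersen.Adj v2 d1) (hd2 : petersen.Adj v2 d2)
    (hd12 : d1 ≠ d2) (hd1u : d1 ≠ u2) (hd2u : d2 ≠ u2) :
    ¬ ThreeEdgeColorable (poleZ3 u1 v1 a1 a2 b1 b2 u2 v2 c1 c2 d1 d2) := by
  rintro ⟨c, hc⟩
  obtain ⟨σ1, hU1, hV1, hA1, hA2, hB1, hB2⟩ :=
    exists_sigma u1 v1 a1 a2 b1 b2 huv1 ha1 ha2 ha12 ha1v ha2v hb1 hb2 hb12 hb1u hb2u
  obtain ⟨σ2, hU2, hV2, hD1, hD2, hC1, hC2⟩ :=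
    exists_sigma v2 u2 d1 d2 c1 c2 huv2.symm hd1 hd2 hd12 hd1u hd2u hc1 hc2 hc12 hc1v hc2v
  have hUpact : pact σ1 ⟨{0,1}, by decide⟩ = u1 :=
    Subtype.ext ((pact_pair σ1 0 1 (by decide)).trans hU1.symm)
  have hVpact : pact σ1 ⟨{2,3}, by decide⟩ = v1 :=
    Subtype.ext ((pact_pair σ1 2 3 (by decide)).trans hV1.symm)
  have hv2pact : pact σ2 ⟨{0,1}, by decide⟩ = v2 :=
    Subtype.ext ((pact_pair σ2 0 1 (by decide)).trans hU2.symm)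
  have hu2pact : pact σ2 ⟨{2,3}, by decide⟩ = u2 :=
    Subtype.ext ((pact_pair σ2 2 3 (by decide)).trans hV2.symm)
  have hvsU : ∀ i : Fin 8, vs i ≠ ⟨{0,1}, by decide⟩ := by decide
  have hvsV : ∀ i : Fin 8, vs i ≠ ⟨{2,3}, by decide⟩ := by decide
  have hpb1 : pact σ1 (vs 2) = b1 :=
    Subtype.ext ((pact_pair σ1 0 4 (by decide)).trans hB1.symm)
  have hpb2 : pact σ1 (vs 5) = b2 :=
    Subtype.ext ((pact_pair σ1 1 4 (by decide)).trans hB2.symm)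
  have hpc1 : pact σ2 (vs 2) = c1 :=
    Subtype.ext ((pact_pair σ2 0 4 (by decide)).trans hC1.symm)
  have hpc2 : pact σ2 (vs 5) = c2 :=
    Subtype.ext ((pact_pair σ2 1 4 (by decide)).trans hC2.symm)
  have hc2u : c2 ≠ u2 := hc2.ne'
  have hb2v : b2 ≠ v1 := hb2.ne'
  set k1 : Fin 8 → {x : PetersenVert // x ≠ u1 ∧ x ≠ v1} :=
    fun i => ⟨pact σ1 (vs i),
      fun h => hvsU i (pact_inj σ1 (h.trans hUpact.symm)),
      fun h => hvsV i (pact_inj σ1 (h.trans hVpact.symm))⟩ with hk1def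
  set k2 : Fin 8 → {x : PetersenVert // x ≠ u2 ∧ x ≠ v2} :=
    fun i => ⟨pact σ2 (vs i),
      fun h => hvsV i (pact_inj σ2 (h.trans hu2pact.symm)),
      fun h => hvsU i (pact_inj σ2 (h.trans hv2pact.symm))⟩ with hk2def
  set fF := embed (fun i => (Sum.inl (k1 i) : {x : PetersenVert // x ≠ u1 ∧ x ≠ v1} ⊕
      ({x : PetersenVert // x ≠ u2 ∧ x ≠ v2} ⊕ Fin 6)))
    (Sum.inr (Sum.inr 2)) (Sum.inr (Sum.inr 3)) (Sum.inr (Sum.inr 0))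
    (Sum.inr (Sum.inl ⟨c2, hc2u, hc2v⟩)) with hfdef
  set gG := embed (fun i => (Sum.inr (Sum.inl (k2 i)) : {x : PetersenVert // x ≠ u1 ∧ x ≠ v1} ⊕
      ({x : PetersenVert // x ≠ u2 ∧ x ≠ v2} ⊕ Fin 6)))
    (Sum.inr (Sum.inr 4)) (Sum.inr (Sum.inr 5)) (Sum.inr (Sum.inr 0))
    (Sum.inl ⟨b2, hb2u, hb2v⟩) with hgdef
  have hk1inj : Function.Injective k1 := fun i j h =>
    vs_inj i j (pact_inj σ1 (congrArg Subtype.val h))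
  have hk2inj : Function.Injective k2 := fun i j h =>
    vs_inj i j (pact_inj σ2 (congrArg Subtype.val h))
  have hfinj : Function.Injective fF :=
    embed_inj (fun i j h => hk1inj (Sum.inl.inj h))
      (fun i h => nomatch h) (fun i h => nomatch h)
      (fun i h => nomatch h) (fun i h => nomatch h)
      (by simp) (by simp) (by simp) (by simp) (by simp) (by simp)
  have hginj : Function.Injective gG :=
    embed_inj (fun i j h => hk2inj (Sum.inl.inj (Sum.inr.inj h)))
      (by simp) (by simp) (by simp) (by simp)
      (by simp) (by simp) (by simp) (by simp) (by simp) (by simp)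
  have hadjcore1 : ∀ i j : Fin 8, Disjoint (vs i).1 (vs j).1 →
      (poleZ3 u1 v1 a1 a2 b1 b2 u2 v2 c1 c2 d1 d2).Adj (Sum.inl (k1 i)) (Sum.inl (k1 j)) := by
    intro i j hij
    have hvij : vs i ≠ vs j := by
      intro h
      rw [h] at hij
      have h0 := disjoint_self.mp hij
      have h2 := (vs j).2
      rw [h0] at h2
      simp at h2
    simp only [poleZ3, SimpleGraph.fromRel_adj]
    constructor
    · intro h
      exact hvij (pact_inj σ1 (congrArg Subtype.val (Sum.inl.inj h)))
    · exact Or.inl ((Finset.disjoint_image σ1.injective).mpr hij)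
  have hadjcore2 : ∀ i j : Fin 8, Disjoint (vs i).1 (vs j).1 →
      (poleZ3 u1 v1 a1 a2 b1 b2 u2 v2 c1 c2 d1 d2).Adj (Sum.inr (Sum.inl (k2 i)))
        (Sum.inr (Sum.inl (k2 j))) := by
    intro i j hij
    have hvij : vs i ≠ vs j := by
      intro h
      rw [h] at hij
      have h0 := disjoint_self.mp hij
      have h2 := (vs j).2
      rw [h0] at h2
      simp at h2
    simp only [poleZ3, SimpleGraph.fromRel_adj]
    constructor
    · intro h
      exact hvij (pact_inj σ2 (congrArg Subtype.val (Sum.inl.inj (Sum.inr.inj h))))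
    · exact Or.inl ((Finset.disjoint_image σ2.injective).mpr hij)
  have hadjb1s : (poleZ3 u1 v1 a1 a2 b1 b2 u2 v2 c1 c2 d1 d2).Adj
      (Sum.inl (k1 2)) (Sum.inr (Sum.inr 0)) := by
    exact ⟨fun h => (nomatch h), Or.inl (Or.inl ⟨rfl, hpb1⟩)⟩
  have hadjb2c2 : (poleZ3 u1 v1 a1 a2 b1 b2 u2 v2 c1 c2 d1 d2).Adj
      (Sum.inl (k1 5)) (Sum.inr (Sum.inl ⟨c2, hc2u, hc2v⟩)) := by
    exact ⟨fun h => (nomatch h), Or.inl ⟨hpb2, rfl⟩⟩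
  have hadjc1s : (poleZ3 u1 v1 a1 a2 b1 b2 u2 v2 c1 c2 d1 d2).Adj
      (Sum.inr (Sum.inl (k2 2))) (Sum.inr (Sum.inr 0)) := by
    exact ⟨fun h => (nomatch (Sum.inr.inj h)), Or.inl (Or.inl ⟨rfl, hpc1⟩)⟩
  have hadjc2b2 : (poleZ3 u1 v1 a1 a2 b1 b2 u2 v2 c1 c2 d1 d2).Adj
      (Sum.inr (Sum.inl (k2 5))) (Sum.inl ⟨b2, hb2u, hb2v⟩) := by
    exact ⟨fun h => (nomatch h), Or.inr ⟨rfl, hpc2⟩⟩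
  have hadjF : ∀ p ∈ Z3Aux.L0,
      (poleZ3 u1 v1 a1 a2 b1 b2 u2 v2 c1 c2 d1 d2).Adj (fF p.1) (fF p.2) := by
    intro p hp
    fin_cases hp
    exacts [hadjb1s, hadjb2c2, hadjcore1 2 3 (by decide), hadjcore1 2 4 (by decide),
      hadjcore1 0 4 (by decide), hadjcore1 0 5 (by decide), hadjcore1 1 5 (by decide),
      hadjcore1 0 7 (by decide), hadjcore1 3 7 (by decide), hadjcore1 1 3 (by decide),
      hadjcore1 1 6 (by decide), hadjcore1 4 6 (by decide)]
  have hadjG : ∀ p ∈ Z3Aux.L0,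
      (poleZ3 u1 v1 a1 a2 b1 b2 u2 v2 c1 c2 d1 d2).Adj (gG p.1) (gG p.2) := by
    intro p hp
    fin_cases hp
    exacts [hadjc1s, hadjc2b2, hadjcore2 2 3 (by decide), hadjcore2 2 4 (by decide),
      hadjcore2 0 4 (by decide), hadjcore2 0 5 (by decide), hadjcore2 1 5 (by decide),
      hadjcore2 0 7 (by decide), hadjcore2 3 7 (by decide), hadjcore2 1 3 (by decide),
      hadjcore2 1 6 (by decide), hadjcore2 4 6 (by decide)]
  have hGf : Z3Aux.Good (fun e => c (Sym2.map fF e)) Z3Aux.L0 := by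
    intro p hp q hq hs hne
    obtain ⟨v, hvp, hvq⟩ := Z3Aux.shares_spec p q hs
    have hmain := hc (Sym2.mk (fF p.1) (fF p.2)) (Sym2.mk (fF q.1) (fF q.2))
      ((SimpleGraph.mem_edgeSet _).mpr (hadjF p hp))
      ((SimpleGraph.mem_edgeSet _).mpr (hadjF q hq))
      (mk_map_ne hfinj hne)
      ⟨fF v, mem_map_pair fF v p hvp, mem_map_pair fF v q hvq⟩
    simpa only [map_mk] using hmain
  have hGg : Z3Aux.Good (fun e => c (Sym2.map gG e)) Z3Aux.L0 := by
    intro p hp q hq hs hne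
    obtain ⟨v, hvp, hvq⟩ := Z3Aux.shares_spec p q hs
    have hmain := hc (Sym2.mk (gG p.1) (gG p.2)) (Sym2.mk (gG q.1) (gG q.2))
      ((SimpleGraph.mem_edgeSet _).mpr (hadjG p hp))
      ((SimpleGraph.mem_edgeSet _).mpr (hadjG q hq))
      (mk_map_ne hginj hne)
      ⟨gG v, mem_map_pair gG v p hvp, mem_map_pair gG v q hvq⟩
    simpa only [map_mk] using hmain
  have e1 := Z3Aux.key hGf
  have e2 := Z3Aux.key hGg
  simp only [Sym2.map_mk] at e1 e2
  have h511 : Sym2.mk (fF (5 : Fin 12)) (fF (11 : Fin 12)) =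
      Sym2.mk (gG (5 : Fin 12)) (gG (11 : Fin 12)) := by
    have h1 : fF (5 : Fin 12) = gG (11 : Fin 12) := by
      show Sum.inl (k1 5) = Sum.inl ⟨b2, hb2u, hb2v⟩
      exact congrArg Sum.inl (Subtype.ext hpb2)
    have h2 : fF (11 : Fin 12) = gG (5 : Fin 12) := by
      show Sum.inr (Sum.inl ⟨c2, hc2u, hc2v⟩) = Sum.inr (Sum.inl (k2 5))
      exact congrArg _ (congrArg _ (Subtype.ext hpc2.symm))
    rw [h1, h2]
    exact Sym2.eq_swap
  have hfinal : c (Sym2.mk (fF (2 : Fin 12)) (fF (10 : Fin 12))) =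
      c (Sym2.mk (gG (2 : Fin 12)) (gG (10 : Fin 12))) := by
    rw [e1, h511, ← e2]
  have hne' : Sym2.mk (fF (2 : Fin 12)) (fF (10 : Fin 12)) ≠
      Sym2.mk (gG (2 : Fin 12)) (gG (10 : Fin 12)) := by
    intro hcon
    rw [Sym2.eq_iff] at hcon
    rcases hcon with ⟨h1, _⟩ | ⟨h1, _⟩
    · exact nomatch h1
    · exact nomatch h1
  exact hc (Sym2.mk (fF (2 : Fin 12)) (fF (10 : Fin 12)))
    (Sym2.mk (gG (2 : Fin 12)) (gG (10 : Fin 12)))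
    ((SimpleGraph.mem_edgeSet _).mpr (hadjF (2, 10) (by decide)))
    ((SimpleGraph.mem_edgeSet _).mpr (hadjG (2, 10) (by decide)))
    hne'
    ⟨Sum.inr (Sum.inr 0), by rw [Sym2.mem_iff]; right; rfl, by rw [Sym2.mem_iff]; right; rfl⟩
    hfinal
end
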